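/- For α, β with α+β+1 > 0, integers 0 ≤ j ≤ i, and all x: Σ_{k=j}^{i} [(α+β+2k+1)/(α+β+k+j+1)_{i-j+1}] · P_{i-k}^{(-α-i-1,-β-i-1)}(-x) · P_{k-j}^{(α+j,β+j)}(x) = x^{i-j}/(i-j)!. -/

import Mathlib

open Finset Real

/-- Pochhammer symbol (rising factorial) `(a)_k`. -/
noncomputable def poch (a : ℝ) (k : ℕ) : ℝ := (ascPochhammer ℝ k).eval a

/-- Classical Laguerre polynomial `L_n^{(α)}(x)` for arbitrary parameter α. -/
noncomputable def lag (α : ℝ) (n : ℕ) (x : ℝ) : ℝ :=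
  ∑ k ∈ Finset.range (n + 1),
    (-1 : ℝ) ^ k * (poch (α + k + 1) (n - k) / (Nat.factorial (n - k))) *
      x ^ k / (Nat.factorial k)

/-- Classical Jacobi polynomial `P_n^{(α,β)}(x)` for arbitrary parameters. -/
noncomputable def jac (α β : ℝ) (n : ℕ) (x : ℝ) : ℝ :=
  ∑ k ∈ Finset.range (n + 1),
    (poch ((n : ℝ) + α + β + 1) k / (Nat.factorial k)) *
      (poch (α + k + 1) (n - k) / (Nat.factorial (n - k))) * ((x - 1) / 2) ^ k

/-- Generalized binomial coefficient `C(x, k)`. -/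
noncomputable def genBinom (x : ℝ) (k : ℕ) : ℝ :=
  (∏ j ∈ Finset.range k, (x - j)) / (Nat.factorial k)

/-- Charlier polynomial `C_n^{(a)}(x)`. -/
noncomputable def charlier (a : ℝ) (n : ℕ) (x : ℝ) : ℝ :=
  ∑ k ∈ Finset.range (n + 1), genBinom x k * (-a) ^ (n - k) / (Nat.factorial (n - k))

lemma poch_zero (a : ℝ) : poch a 0 = 1 := by simp [poch]
lemma poch_one (a : ℝ) : poch a 1 = a := by simp [poch]
lemma poch_succ (a : ℝ) (k : ℕ) : poch a (k+1) = poch a k * (a + k) := by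
  simpa [poch] using ascPochhammer_succ_eval k a
lemma poch_succ_left (a : ℝ) (k : ℕ) : poch a (k+1) = a * poch (a+1) k := by
  have := ascPochhammer_succ_left (S := ℝ) k
  simp [poch, this, Polynomial.eval_comp]
lemma poch_pos {a : ℝ} (ha : 0 < a) (k : ℕ) : 0 < poch a k := ascPochhammer_pos k a ha
lemma poch_add (a : ℝ) (k l : ℕ) : poch a (k + l) = poch a k * poch (a + k) l := by
  induction l with
  | zero => simp [poch_zero]
  | succ l ih =>
    rw [← Nat.add_assoc, poch_succ, ih, poch_succ]
    push_cast
    ring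
lemma poch_neg (a : ℝ) (k : ℕ) : poch (-a) k = (-1)^k * poch (a - k + 1) k := by
  induction k with
  | zero => simp [poch_zero]
  | succ k ih =>
    rw [poch_succ, ih]
    have h1 : poch (a - (k+1 : ℕ) + 1) (k+1)
        = (a - ((k+1:ℕ):ℝ) + 1) * poch (a - ((k+1:ℕ):ℝ) + 1 + 1) k := poch_succ_left _ _
    rw [h1]
    have h2 : a - ((k+1:ℕ):ℝ) + 1 + 1 = a - k + 1 := by push_cast; ring
    rw [h2]
    push_cast
    ring

lemma tele (u : ℝ) (hu : 0 < u) (N : ℕ) (hN : 1 ≤ N) :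
    ∑ t ∈ range (N+1),
      (-1:ℝ)^(N-t) * (u + 2*t) / (poch (u+t) (N+1) * t.factorial * (N-t).factorial) = 0 := by
  set G : ℕ → ℝ := fun t => (-1:ℝ)^(N+t+1) * t * (N.choose t) / ((N : ℝ) * N.factorial * poch (u+t) N) with hG
  have key : ∀ t ∈ range (N+1),
      (-1:ℝ)^(N-t) * (u + 2*t) / (poch (u+t) (N+1) * t.factorial * (N-t).factorial)
        = G (t+1) - G t := by
    intro t ht
    have htN : t ≤ N := Nat.lt_succ_iff.mp (mem_range.mp ht)
    have hsign : (-1:ℝ)^(N-t) = (-1:ℝ)^(N+t) := by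
      have hnt : N + t = (N - t) + 2*t := by omega
      rw [hnt, pow_add, pow_mul]
      norm_num
    have hP : (0:ℝ) < poch (u+t) N := poch_pos (by positivity) N
    have hQ : (0:ℝ) < poch (u+t+1) N := poch_pos (by positivity) N
    have hP1 : (0:ℝ) < poch (u+t) (N+1) := poch_pos (by positivity) (N+1)
    have e1 : poch (u+t) (N+1) = poch (u+t) N * (u+t+N) := poch_succ _ _
    have e2 : poch (u+t) (N+1) = (u+t) * poch (u+t+1) N := poch_succ_left _ _
    have e3 : ((N.choose (t+1)) : ℝ) * (t+1) = (N.choose t) * ((N:ℝ) - t) := by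
      have h4 := congrArg (Nat.cast : ℕ → ℝ) (Nat.choose_succ_right_eq N t)
      push_cast [Nat.cast_sub htN] at h4
      linarith [h4]
    have e4 : ((N.factorial : ℕ) : ℝ) = (N.choose t) * t.factorial * (N-t).factorial := by
      have := Nat.choose_mul_factorial_mul_factorial htN
      exact_mod_cast (congrArg (fun n : ℕ => (n : ℝ)) this).symm
    have e1' : (u+t) * poch (u+t+1) N = poch (u+t) N * (u+t+N) := by rw [← e2, e1]
    have hcast : (((t+1:ℕ)):ℝ) = (t:ℝ)+1 := by push_cast; ring
    have harg : u + ((t:ℝ)+1) = (u + t) + 1 := by ring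
    have hNne : ((N:ℝ)) ≠ 0 := by positivity
    have hfacN : ((N.factorial : ℕ):ℝ) ≠ 0 := by positivity
    have hfact : ((t.factorial : ℕ):ℝ) ≠ 0 := by positivity
    have hfacNt : (((N-t).factorial : ℕ):ℝ) ≠ 0 := by positivity
    have hDne : poch (u+(t:ℝ)) (N+1) * (t.factorial:ℝ) * ((N-t).factorial:ℝ) ≠ 0 := by positivity
    have hD2ne : (N:ℝ) * (N.factorial:ℝ) * poch (u+(t:ℝ)+1) N ≠ 0 := by positivity
    have hD3ne : (N:ℝ) * (N.factorial:ℝ) * poch (u+(t:ℝ)) N ≠ 0 := by positivity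
    have hPne := ne_of_gt hP
    have hQne := ne_of_gt hQ
    have hR : ((t:ℝ)+1) * (N.choose (t+1)) / ((N:ℝ) * N.factorial * poch (u+t+1) N)
          + (t:ℝ) * (N.choose t) / ((N:ℝ) * N.factorial * poch (u+t) N)
        = (((t:ℝ)+1) * (N.choose (t+1)) * poch (u+t) N + (t:ℝ) * (N.choose t) * poch (u+t+1) N)
            / ((N:ℝ) * N.factorial * poch (u+t) N * poch (u+t+1) N) := by
      field_simp
    have core : (u + 2*(t:ℝ)) / (poch (u+t) (N+1) * t.factorial * (N-t).factorial)
        = ((t:ℝ)+1) * (N.choose (t+1)) / ((N:ℝ) * N.factorial * poch (u+t+1) N)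
          + (t:ℝ) * (N.choose t) / ((N:ℝ) * N.factorial * poch (u+t) N) := by
      rw [hR, div_eq_div_iff hDne (by positivity)]
      linear_combination
        ((N:ℝ)*(u+2*(t:ℝ))*poch (u+t) N*poch (u+t+1) N) * e4
        - ((u+(t:ℝ))*poch (u+t) N*poch (u+t+1) N*((t.factorial:ℝ)*(N-t).factorial)) * e3
        - ((t:ℝ)*(N.choose t)*poch (u+t+1) N*((t.factorial:ℝ)*(N-t).factorial)) * e1'
        - ((((t:ℝ)+1)*(N.choose (t+1))*poch (u+t) N + (t:ℝ)*(N.choose t)*poch (u+t+1) N)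
            *((t.factorial:ℝ)*(N-t).factorial)) * e2
    simp only [hG]
    rw [hsign, hcast, harg, mul_div_assoc, core]
    simp only [pow_add, pow_succ]
    ring
  rw [Finset.sum_congr rfl key, Finset.sum_range_sub]
  simp [hG, Nat.choose_succ_self]

lemma key (A B : ℝ) (hAB : 0 < A + B + 1) (m : ℕ) (x : ℝ) :
    ∑ n ∈ range (m+1), (A+B+2*n+1) / poch (A+B+n+1) (m+1)
        * jac (-A-m-1) (-B-m-1) (m-n) (-x) * jac A B n x
      = x^m / m.factorial := by
  set y : ℝ := (x-1)/2 with hy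
  set z : ℝ := (-x-1)/2 with hz
  set c : ℕ → ℝ := fun n => (A+B+2*n+1) / poch (A+B+n+1) (m+1) with hc
  set D : ℕ → ℕ → ℝ := fun n s =>
    (poch ((((m-n : ℕ)) : ℝ)+(-A-m-1)+(-B-m-1)+1) s / (Nat.factorial s)) *
      (poch ((-A-m-1)+s+1) ((m-n)-s) / (Nat.factorial ((m-n)-s))) * z^s with hD
  set E : ℕ → ℕ → ℝ := fun n r =>
    (poch ((n : ℝ)+A+B+1) r / (Nat.factorial r)) *
      (poch (A+r+1) (n-r) / (Nat.factorial (n-r))) * y^r with hE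
  have hjac2 : ∀ n, n ≤ m → jac A B n x = ∑ r ∈ range (m+1), (if r ≤ n then E n r else 0) := by
    intro n hn
    rw [jac]
    rw [show (∑ r ∈ range (n+1), (poch ((n : ℝ) + A + B + 1) r / (Nat.factorial r)) *
      (poch (A + r + 1) (n - r) / (Nat.factorial (n - r))) * ((x - 1) / 2) ^ r)
        = ∑ r ∈ range (n+1), (if r ≤ n then E n r else 0) from
      Finset.sum_congr rfl fun r hr => by
        rw [if_pos (Nat.lt_succ_iff.mp (mem_range.mp hr))]]
    exact Finset.sum_subset (Finset.range_subset_range.mpr (by omega))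
      (fun r _ hr => if_neg (by simp at hr ⊢; omega))
  have hjac1 : ∀ n, n ≤ m → jac (-A-m-1) (-B-m-1) (m-n) (-x)
      = ∑ s ∈ range (m+1), (if n + s ≤ m then D n s else 0) := by
    intro n hn
    rw [jac]
    rw [show (∑ s ∈ range ((m-n)+1), (poch (((m-n : ℕ) : ℝ) + (-A-m-1) + (-B-m-1) + 1) s / (Nat.factorial s)) *
      (poch ((-A-m-1) + s + 1) ((m-n) - s) / (Nat.factorial ((m-n) - s))) * ((-x - 1) / 2) ^ s)
        = ∑ s ∈ range ((m-n)+1), (if n + s ≤ m then D n s else 0) from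
      Finset.sum_congr rfl fun s hs => by
        rw [if_pos (by have := mem_range.mp hs; omega)]]
    exact Finset.sum_subset (Finset.range_subset_range.mpr (by omega))
      (fun s _ hs => if_neg (by simp at hs ⊢; omega))
  have expand : ∀ n ∈ range (m+1),
      (A+B+2*n+1) / poch (A+B+n+1) (m+1) * jac (-A-m-1) (-B-m-1) (m-n) (-x) * jac A B n x
        = ∑ s ∈ range (m+1), ∑ r ∈ range (m+1),
            (if r ≤ n ∧ n + s ≤ m then c n * D n s * E n r else 0) := by
    intro n hn
    have hn' : n ≤ m := by have := mem_range.mp hn; omega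
    rw [hjac1 n hn', hjac2 n hn', show (A+B+2*(n:ℝ)+1) / poch (A+B+n+1) (m+1) = c n from rfl, mul_assoc,
      Finset.sum_mul_sum, Finset.mul_sum]
    refine Finset.sum_congr rfl fun s _ => ?_
    rw [Finset.mul_sum]
    refine Finset.sum_congr rfl fun r _ => ?_
    by_cases h1 : n + s ≤ m <;> by_cases h2 : r ≤ n <;> simp [h1, h2] <;> ring
  rw [Finset.sum_congr rfl expand]
  rw [Finset.sum_comm]
  rw [show (∑ s ∈ range (m+1), ∑ n ∈ range (m+1), ∑ r ∈ range (m+1),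
        (if r ≤ n ∧ n + s ≤ m then c n * D n s * E n r else 0))
      = ∑ s ∈ range (m+1), ∑ r ∈ range (m+1), ∑ n ∈ range (m+1),
        (if r ≤ n ∧ n + s ≤ m then c n * D n s * E n r else 0) from
    Finset.sum_congr rfl fun s _ => Finset.sum_comm]
  rw [Finset.sum_comm]
  have inner : ∀ r ∈ range (m+1), ∀ s ∈ range (m+1),
      ∑ n ∈ range (m+1), (if r ≤ n ∧ n + s ≤ m then c n * D n s * E n r else 0)
        = (if r + s = m then (-1:ℝ)^s/(Nat.factorial r * Nat.factorial s) else 0) * z^s * y^r := by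
    intro r hr s hs
    by_cases hrs : r + s ≤ m
    · set N := m - r - s with hNdef
      have hmN : m = r + s + N := by omega
      set u : ℝ := A + B + 2*r + 1 with hu
      set C0 : ℝ := (-1:ℝ)^s * poch (A+r+1) N / (Nat.factorial r * Nat.factorial s) * z^s * y^r with hC0
      have hstep1 : ∑ n ∈ range (m+1), (if r ≤ n ∧ n + s ≤ m then c n * D n s * E n r else 0)
          = ∑ n ∈ Ico r (r + (N+1)), c n * D n s * E n r := by
        rw [← Finset.sum_subset (s₁ := Ico r (r + (N+1)))
          (fun n hn => mem_range.mpr (by have := mem_Ico.mp hn; omega))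
          (fun n hn hn2 => if_neg (by
            have := mem_range.mp hn
            simp only [mem_Ico, not_and, not_lt] at hn2
            omega))]
        exact Finset.sum_congr rfl fun n hn => if_pos (by have := mem_Ico.mp hn; omega)
      have hstep2 : ∑ n ∈ Ico r (r + (N+1)), c n * D n s * E n r
          = ∑ t ∈ range (N+1), c (r+t) * D (r+t) s * E (r+t) r := by
        rw [Finset.sum_Ico_eq_sum_range]
        simp
      have hpt : ∀ t ∈ range (N+1), c (r+t) * D (r+t) s * E (r+t) r
          = C0 * ((-1:ℝ)^(N-t) * (u + 2*t) / (poch (u+t) (N+1) * t.factorial * (N-t).factorial)) := by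
        intro t ht'
        have ht : t ≤ N := by have := mem_range.mp ht'; omega
        have hr0 : (0:ℝ) ≤ (r:ℝ) := Nat.cast_nonneg r
        have ht0 : (0:ℝ) ≤ (t:ℝ) := Nat.cast_nonneg t
        have hN0 : (0:ℝ) ≤ (N:ℝ) := Nat.cast_nonneg N
        have hcastm : (m:ℝ) = (r:ℝ) + s + N := by rw [hmN]; push_cast; ring
        have hnat1 : (r+t) - r = t := by omega
        have hnat2 : (m - (r+t)) - s = N - t := by omega
        have hnat3 : m - (r+t) = (N - t) + s := by omega
        have hcastNt : ((N - t : ℕ) : ℝ) = (N:ℝ) - t := by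
          push_cast [Nat.cast_sub ht]; ring
        have hcast1 : ((m - (r+t) : ℕ) : ℝ) = ((N:ℝ) - t) + s := by
          rw [hnat3]; push_cast [Nat.cast_sub ht]; ring
        simp only [hc, hD, hE, hnat1, hnat2, hcast1]
        -- rewrite first poch via poch_neg
        have eqa : (((N:ℝ) - t) + s) + (-A-(m:ℝ)-1) + (-B-(m:ℝ)-1) + 1
            = -(A+B+2*r+s+N+t+1) := by rw [hcastm]; ring
        have eqa2 : (A+B+2*(r:ℝ)+s+N+t+1) - (s:ℕ) + 1 = A+B+2*r+N+t+2 := by push_cast; ring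
        have h1 : poch ((((N:ℝ) - t) + s) + (-A-(m:ℝ)-1) + (-B-(m:ℝ)-1) + 1) s
            = (-1:ℝ)^s * poch (A+B+2*r+N+t+2) s := by
          rw [eqa, poch_neg, eqa2]
        have eqb : -A-(m:ℝ)-1+(s:ℕ)+1 = -(A+r+N) := by rw [hcastm]; push_cast; ring
        have eqb2 : (A+(r:ℝ)+N) - ((N - t : ℕ) : ℝ) + 1 = A+r+t+1 := by
          rw [hcastNt]; ring
        have h2 : poch (-A-(m:ℝ)-1+(s:ℕ)+1) (N-t)
            = (-1:ℝ)^(N-t) * poch (A+(r:ℝ)+t+1) (N-t) := by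
          rw [eqb, poch_neg, eqb2]
        have eqc : ((r+t : ℕ) : ℝ) + A + B + 1 = A+B+(r:ℝ)+t+1 := by push_cast; ring
        have eqd : A+B+((r+t : ℕ) : ℝ)+1 = A+B+(r:ℝ)+t+1 := by push_cast; ring
        have hsplitn : m + 1 = r + ((N+1) + s) := by omega
        have eqe : A+B+(r:ℝ)+t+1 + (r:ℕ) = A+B+2*r+t+1 := by push_cast; ring
        have eqf : A+B+2*(r:ℝ)+t+1 + ((N+1 : ℕ) : ℝ) = A+B+2*r+N+t+2 := by push_cast; ring
        have h3 : poch (A+B+((r+t : ℕ) : ℝ)+1) (m+1)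
            = poch (A+B+(r:ℝ)+t+1) r * (poch (A+B+2*(r:ℝ)+t+1) (N+1) * poch (A+B+2*(r:ℝ)+N+t+2) s) := by
          rw [eqd, hsplitn, poch_add, poch_add, eqe, eqf]
        have h4 : poch (A+(r:ℝ)+1) t * poch (A+(r:ℝ)+t+1) (N-t) = poch (A+(r:ℝ)+1) N := by
          have eqg : A+(r:ℝ)+(t:ℝ)+1 = (A+(r:ℝ)+1)+(t:ℕ) := by push_cast; ring
          rw [eqg, ← poch_add, show t + (N-t) = N from by omega]
        have hb1 : (0:ℝ) < A+B+(r:ℝ)+t+1 := by linarith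
        have hb2 : (0:ℝ) < A+B+2*(r:ℝ)+t+1 := by linarith
        have hb3 : (0:ℝ) < A+B+2*(r:ℝ)+N+t+2 := by linarith
        have hp1 : poch (A+B+(r:ℝ)+t+1) r ≠ 0 := ne_of_gt (poch_pos hb1 r)
        have hp2 : poch (A+B+2*(r:ℝ)+t+1) (N+1) ≠ 0 := ne_of_gt (poch_pos hb2 (N+1))
        have hp3 : poch (A+B+2*(r:ℝ)+N+t+2) s ≠ 0 := ne_of_gt (poch_pos hb3 s)
        have hf1 : ((Nat.factorial r : ℕ) : ℝ) ≠ 0 := by positivity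
        have hf2 : ((Nat.factorial s : ℕ) : ℝ) ≠ 0 := by positivity
        have hf3 : ((Nat.factorial t : ℕ) : ℝ) ≠ 0 := by positivity
        have hf4 : ((Nat.factorial (N-t) : ℕ) : ℝ) ≠ 0 := by positivity
        have equ : u + (t:ℝ) = A+B+2*(r:ℝ)+t+1 := by rw [hu]; ring
        have equ2 : A+B+2*((r+t:ℕ):ℝ)+1 = u + 2*t := by rw [hu]; push_cast; ring
        rw [h1, h2, eqc, h3, equ, equ2, hC0, ← h4]
        field_simp
      rw [hstep1, hstep2, Finset.sum_congr rfl hpt, ← Finset.mul_sum]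
      rcases Nat.eq_zero_or_pos N with hN0 | hN1
      · have hu0 : u ≠ 0 := by
          have : (0:ℝ) < u := by rw [hu]; linarith [Nat.cast_nonneg (α := ℝ) r]
          exact ne_of_gt this
        rw [hN0, Finset.sum_range_one]
        norm_num [poch_one]
        rw [div_self hu0, mul_one, if_pos (by omega), hC0, hN0, poch_zero]
        ring
      · rw [tele u (by rw [hu]; have : (0:ℝ) ≤ (r:ℝ) := Nat.cast_nonneg r; linarith) N hN1,
          mul_zero, if_neg (by omega)]
        ring
    · rw [Finset.sum_eq_zero (fun n _ => if_neg (by omega)), if_neg (by omega)]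
      ring

  rw [Finset.sum_congr rfl fun r hr => Finset.sum_congr rfl fun s hs => inner r hr s hs]
  have collapse : ∀ r ∈ range (m+1),
      ∑ s ∈ range (m+1), (if r + s = m then (-1:ℝ)^s/(Nat.factorial r * Nat.factorial s) else 0) * z^s * y^r
        = (-1:ℝ)^(m-r)/(Nat.factorial r * Nat.factorial (m-r)) * z^(m-r) * y^r := by
    intro r hr
    have hrm : r ≤ m := by have := mem_range.mp hr; omega
    rw [Finset.sum_eq_single (m-r)]
    · rw [if_pos (by omega)]
    · intro s _ hsne
      rw [if_neg (by omega)]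
      ring
    · intro habs
      exact absurd (mem_range.mpr (by omega)) habs
  rw [Finset.sum_congr rfl collapse]
  have hx : x = y - z := by rw [hy, hz]; ring
  rw [hx, sub_eq_add_neg, add_pow]
  rw [Finset.sum_div]
  refine Finset.sum_congr rfl fun r hr => ?_
  have hrm : r ≤ m := by have := mem_range.mp hr; omega
  have hfac : ((m.factorial : ℕ) : ℝ) = (m.choose r) * (Nat.factorial r) * (Nat.factorial (m-r)) := by
    exact_mod_cast (congrArg (fun q : ℕ => (q : ℝ)) (Nat.choose_mul_factorial_mul_factorial hrm)).symm
  have h1 : ((Nat.factorial r : ℕ) : ℝ) ≠ 0 := by positivity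
  have h2 : ((Nat.factorial (m-r) : ℕ) : ℝ) ≠ 0 := by positivity
  have h3 : ((m.factorial : ℕ) : ℝ) ≠ 0 := by positivity
  rw [neg_pow z (m-r)]
  field_simp
  linear_combination (y^r * z^(m-r)) * hfac

theorem stmt5 (α β : ℝ) (h : α + β + 1 > 0) (i j : ℕ) (hij : j ≤ i) (x : ℝ) :
    ∑ k ∈ Finset.Icc j i,
        (α + β + 2 * k + 1) / poch (α + β + k + j + 1) (i - j + 1) *
          jac (-α - i - 1) (-β - i - 1) (i - k) (-x) * jac (α + j) (β + j) (k - j) x =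
      x ^ (i - j) / (Nat.factorial (i - j)) := by
  have him : i = j + (i - j) := by omega
  set m := i - j with hm
  have hA : (0:ℝ) < (α + j) + (β + j) + 1 := by
    have : (0:ℝ) ≤ (j:ℝ) := Nat.cast_nonneg j
    linarith
  have hkey := key (α + j) (β + j) hA m x
  rw [show Finset.Icc j i = Finset.Ico j (i+1) from by rw [Finset.Ico_add_one_right_eq_Icc]]
  rw [Finset.sum_Ico_eq_sum_range]
  have hrange : i + 1 - j = m + 1 := by omega
  rw [hrange, ← hkey]
  refine Finset.sum_congr rfl fun n hn => ?_
  have e1 : α+β+2*(((j+n):ℕ):ℝ)+1 = (α+(j:ℝ))+(β+(j:ℝ))+2*(n:ℝ)+1 := by push_cast; ring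
  have e2 : α+β+(((j+n):ℕ):ℝ)+(j:ℝ)+1 = (α+(j:ℝ))+(β+(j:ℝ))+(n:ℝ)+1 := by push_cast; ring
  have hicast : (i:ℝ) = (j:ℝ) + (m:ℝ) := by exact_mod_cast congrArg (Nat.cast : ℕ → ℝ) him
  have e4 : -α-(i:ℝ)-1 = -(α+(j:ℝ))-(m:ℝ)-1 := by rw [hicast]; ring
  have e4' : -β-(i:ℝ)-1 = -(β+(j:ℝ))-(m:ℝ)-1 := by rw [hicast]; ring
  have e5 : i - (j+n) = m - n := by omega
  have e6 : (j+n) - j = n := by omega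
  rw [e1, e2, e4, e4', e5, e6]
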